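/- The complete elliptic integral of the second kind, E : (0, 1) → ℝ, E(z) := ∫_0^{π/2} √(1 − z²·sin²(k)) dk, is transcendental over ℝ: for every nonzero polynomial p ∈ ℝ[X, Y] and all a < b with 0 < a < b < 1, there exists z ∈ (a, b) such that p(z, E(z)) ≠ 0. -/

import Mathlib

open scoped Real

noncomputable section

/-- The complete elliptic integral of the second kind,
`E(z) = ∫_0^{π/2} √(1 - z² sin²(k)) dk`. -/
def ellipticE (z : ℝ) : ℝ :=
  ∫ k in (0 : ℝ)..(π / 2), Real.sqrt (1 - z ^ 2 * Real.sin k ^ 2)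

section CoreLemma

open Filter MvPolynomial Real


/-- Core lemma: if `u, v → 0` along a nontrivial filter with `v/u → ∞` and
`v^(k+1)/u^k → 0` for every `k`, then no nonzero real polynomial in two variables
can vanish eventually on `(u, v)`. -/
lemma no_poly_rel {u v : ℝ → ℝ} {l : Filter ℝ} [l.NeBot]
    (hu : ∀ᶠ z in l, 0 < u z)
    (hv : ∀ᶠ z in l, 0 < v z)
    (hv0 : Tendsto v l (nhds 0))
    (hvu : Tendsto (fun z => v z / u z) l atTop)
    (h5 : ∀ k : ℕ, Tendsto (fun z => v z ^ (k + 1) / u z ^ k) l (nhds 0))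
    (q : MvPolynomial (Fin 2) ℝ) (hq : q ≠ 0)
    (hzero : ∀ᶠ z in l, eval ![u z, v z] q = 0) : False := by
  classical
  set D := q.totalDegree with hD
  have hne : q.support.Nonempty := support_nonempty.mpr hq
  obtain ⟨m₀, hm₀s, hmin⟩ := q.support.exists_min_image
    (fun m => (m 0 + m 1) * (D + 1) + (D - m 1)) hne
  set i₀ := m₀ 0
  set j₀ := m₀ 1
  set b₀ := coeff m₀ q with hb₀def
  have hb₀ : b₀ ≠ 0 := mem_support_iff.mp hm₀s
  have hdeg : ∀ m ∈ q.support, m 0 + m 1 ≤ D := by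
    intro m hm
    have : (m.sum fun _ e => e) ≤ D := le_totalDegree hm
    rwa [Finsupp.sum_fintype _ _ (fun _ => rfl), Fin.sum_univ_two] at this
  -- eventual basic facts
  have huv : ∀ᶠ z in l, u z ≤ v z := by
    filter_upwards [hvu.eventually_ge_atTop 1, hu] with z h1 h2
    exact (one_le_div h2).mp h1
  have hv1 : ∀ᶠ z in l, v z ≤ 1 := by
    filter_upwards [hv0.eventually (eventually_le_nhds (by norm_num : (0:ℝ) < 1))] with z hz
    exact hz
  -- the normalized terms
  set T : (Fin 2 →₀ ℕ) → ℝ → ℝ := fun m z =>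
    coeff m q * ((u z ^ m 0 * v z ^ m 1) / (u z ^ i₀ * v z ^ j₀)) with hT
  have hTm₀ : Tendsto (T m₀) l (nhds b₀) := by
    have : ∀ᶠ z in l, T m₀ z = b₀ := by
      filter_upwards [hu, hv] with z h1 h2
      have : u z ^ i₀ * v z ^ j₀ ≠ 0 := by positivity
      show coeff m₀ q * ((u z ^ i₀ * v z ^ j₀) / (u z ^ i₀ * v z ^ j₀)) = b₀
      rw [div_self this, mul_one, hb₀def]
    exact tendsto_const_nhds.congr' (this.mono fun z hz => hz.symm)
  have hTother : ∀ m ∈ q.support, m ≠ m₀ → Tendsto (T m) l (nhds 0) := by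
    intro m hms hmne
    have hij : m 0 + m 1 ≤ D := hdeg m hms
    have hij₀ : i₀ + j₀ ≤ D := hdeg m₀ hm₀s
    have hkey : (i₀ + j₀) * (D + 1) + (D - j₀) ≤ (m 0 + m 1) * (D + 1) + (D - m 1) :=
      hmin m hms
    have hijne : ¬ (m 0 = i₀ ∧ m 1 = j₀) := by
      rintro ⟨h0, h1⟩
      apply hmne
      ext x
      fin_cases x
      · exact h0
      · exact h1
    have hj₀D : j₀ ≤ D := le_trans (Nat.le_add_left _ _) hij₀
    have hjD : m 1 ≤ D := le_trans (Nat.le_add_left _ _) hij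
    have htot2 : i₀ + j₀ ≤ m 0 + m 1 := by
      by_contra hcon
      push_neg at hcon
      have h1 : (m 0 + m 1) * (D + 1) + (D - m 1) < (i₀ + j₀) * (D + 1) := by
        have h2 : (m 0 + m 1) + 1 ≤ i₀ + j₀ := hcon
        calc (m 0 + m 1) * (D + 1) + (D - m 1) < (m 0 + m 1) * (D + 1) + (D + 1) := by omega
          _ = ((m 0 + m 1) + 1) * (D + 1) := by ring
          _ ≤ (i₀ + j₀) * (D + 1) := Nat.mul_le_mul_right _ h2
      omega
    -- main case analysis
    rcases eq_or_lt_of_le htot2 with htot | htot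
    · -- equal total degree, m 1 < j₀
      have hprod : (i₀ + j₀) * (D + 1) = (m 0 + m 1) * (D + 1) := by rw [htot]
      have hkey2 : D - j₀ ≤ D - m 1 := by omega
      have hjlt : m 1 < j₀ := by omega
      set e := j₀ - m 1 with he
      have hie : m 0 = i₀ + e := by omega
      have hepos : e ≠ 0 := by omega
      -- T m z = c * (u/v)^e
      have huvpow : Tendsto (fun z => (u z / v z) ^ e) l (nhds 0) := by
        have h1 : Tendsto (fun z => u z / v z) l (nhds 0) := by
          have := hvu.inv_tendsto_atTop
          refine this.congr (fun z => ?_)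
          simp [inv_div]
        simpa [zero_pow hepos] using h1.pow e
      have heq : ∀ᶠ z in l, coeff m q * (u z / v z) ^ e = T m z := by
        filter_upwards [hu, hv] with z h1 h2
        have hv0' : v z ≠ 0 := ne_of_gt h2
        have hu0' : u z ≠ 0 := ne_of_gt h1
        simp only [hT]
        congr 1
        rw [hie, div_pow, pow_add]
        have hj₀e : j₀ = m 1 + e := by omega
        rw [hj₀e, pow_add]
        field_simp
      refine Tendsto.congr' heq ?_
      simpa using huvpow.const_mul (coeff m q)
    · -- strictly larger total degree
      rcases le_or_gt i₀ (m 0) with hile | hilt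
      · -- m 0 ≥ i₀ : bound by |c| * v ^ (total - (i₀+j₀))
        set e := m 0 + m 1 - (i₀ + j₀) with he
        have hepos : e ≠ 0 := by omega
        apply squeeze_zero_norm' (a := fun z => |coeff m q| * v z ^ e)
        · filter_upwards [hu, hv, huv, hv1] with z h1 h2 h3 h4
          simp only [hT]
          rw [Real.norm_eq_abs, abs_mul]
          refine mul_le_mul_of_nonneg_left ?_ (abs_nonneg _)
          have hdpos : 0 < u z ^ i₀ * v z ^ j₀ := by positivity
          rw [abs_of_nonneg (by positivity)]
          rw [div_le_iff₀ hdpos]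
          have h1' : u z ^ m 0 * v z ^ m 1 ≤ u z ^ i₀ * v z ^ (m 1 + (m 0 - i₀)) := by
            have hu' : u z ^ m 0 = u z ^ i₀ * u z ^ (m 0 - i₀) := by
              rw [← pow_add]; congr 1; omega
            rw [hu', pow_add]
            have hle : u z ^ (m 0 - i₀) ≤ v z ^ (m 0 - i₀) := pow_le_pow_left₀ h1.le h3 _
            have := mul_le_mul_of_nonneg_left hle (pow_pos h1 i₀).le
            nlinarith [pow_pos h2 (m 1), pow_pos h1 i₀, pow_nonneg h1.le (m 0 - i₀)]
          have h2' : u z ^ i₀ * v z ^ (m 1 + (m 0 - i₀)) = v z ^ e * (u z ^ i₀ * v z ^ j₀) := by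
            have hj' : m 1 + (m 0 - i₀) = e + j₀ := by omega
            rw [hj', pow_add]; ring
          calc u z ^ m 0 * v z ^ m 1 ≤ u z ^ i₀ * v z ^ (m 1 + (m 0 - i₀)) := h1'
            _ = v z ^ e * (u z ^ i₀ * v z ^ j₀) := h2'
        · have : Tendsto (fun z => v z ^ e) l (nhds 0) := by
            simpa [zero_pow hepos] using hv0.pow e
          simpa using this.const_mul |coeff m q|
      · -- m 0 < i₀
        set k := i₀ - m 0 with hk
        have hkpos : k ≠ 0 := by omega
        have hjlarge : m 1 ≥ j₀ + k + 1 := by omega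
        apply squeeze_zero_norm' (a := fun z => |coeff m q| * (v z ^ (k + 1) / u z ^ k))
        · filter_upwards [hu, hv, huv, hv1] with z h1 h2 h3 h4
          simp only [hT]
          rw [Real.norm_eq_abs, abs_mul]
          refine mul_le_mul_of_nonneg_left ?_ (abs_nonneg _)
          have hdpos : 0 < u z ^ i₀ * v z ^ j₀ := by positivity
          rw [abs_of_nonneg (by positivity)]
          rw [div_le_div_iff₀ hdpos (by positivity : (0:ℝ) < u z ^ k)]
          have hii : m 0 + k = i₀ := by omega
          have hjj : m 1 = j₀ + (k + 1) + (m 1 - j₀ - k - 1) := by omega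
          calc u z ^ m 0 * v z ^ m 1 * u z ^ k
              = u z ^ i₀ * (v z ^ j₀ * v z ^ (k+1) * v z ^ (m 1 - j₀ - k - 1)) := by
                rw [mul_comm (u z ^ m 0) (v z ^ m 1), mul_assoc, ← pow_add, hii]
                nth_rewrite 1 [hjj]; rw [pow_add, pow_add]; ring
            _ ≤ u z ^ i₀ * (v z ^ j₀ * v z ^ (k+1) * 1) := by
                refine mul_le_mul_of_nonneg_left ?_ (by positivity)
                refine mul_le_mul_of_nonneg_left ?_ (by positivity)
                exact pow_le_one₀ h2.le h4
            _ = v z ^ (k + 1) * (u z ^ i₀ * v z ^ j₀) * 1 := by ring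
            _ = v z ^ (k + 1) * (u z ^ i₀ * v z ^ j₀) := by ring
        · simpa using (h5 k).const_mul |coeff m q|
  -- assemble
  have hsum : Tendsto (fun z => ∑ m ∈ q.support, T m z) l (nhds b₀) := by
    have : Tendsto (fun z => ∑ m ∈ q.support, T m z) l
        (nhds (∑ m ∈ q.support, if m = m₀ then b₀ else 0)) := by
      refine tendsto_finset_sum _ (fun m hm => ?_)
      by_cases h : m = m₀
      · subst h; simpa using hTm₀
      · simpa [h] using hTother m hm h
    simpa [Finset.sum_ite_eq' q.support m₀ (fun _ => b₀), hm₀s] using this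
  have hzero' : Tendsto (fun z => ∑ m ∈ q.support, T m z) l (nhds 0) := by
    have hev : ∀ᶠ z in l, (0:ℝ) = (∑ m ∈ q.support, T m z) := by
      filter_upwards [hzero, hu, hv] with z h0 h1 h2
      have hd : u z ^ i₀ * v z ^ j₀ ≠ 0 := by positivity
      have : ∑ m ∈ q.support, T m z
          = (∑ m ∈ q.support, coeff m q * (u z ^ m 0 * v z ^ m 1)) / (u z ^ i₀ * v z ^ j₀) := by
        rw [Finset.sum_div]
        refine Finset.sum_congr rfl (fun m hm => ?_)
        simp only [hT]; ring
      rw [eq_comm, this]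
      have heval : (eval ![u z, v z] q)
          = ∑ m ∈ q.support, coeff m q * (u z ^ m 0 * v z ^ m 1) := by
        rw [eval_eq']
        refine Finset.sum_congr rfl (fun m hm => ?_)
        rw [Fin.prod_univ_two]
        simp
      rw [← heval, h0, zero_div]
    exact tendsto_const_nhds.congr' hev
  exact hb₀ (tendsto_nhds_unique hsum hzero')


end CoreLemma

namespace EllipticAux

open Real intervalIntegral


lemma A_eq (z k : ℝ) : 1 - z ^ 2 * sin k ^ 2 = (1 - z ^ 2) + z ^ 2 * cos k ^ 2 := by
  have := sin_sq_add_cos_sq k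
  nlinarith [this]

lemma A_pos {z : ℝ} (hz : z ∈ Set.Ioo (0:ℝ) 1) (k : ℝ) :
    0 < 1 - z ^ 2 * sin k ^ 2 := by
  obtain ⟨h0, h1⟩ := hz
  nlinarith [sin_sq_le_one k, sq_nonneg (z * sin k), sq_nonneg (cos k), A_eq z k]

lemma cont_sqrtA {z : ℝ} : Continuous (fun k => Real.sqrt (1 - z ^ 2 * sin k ^ 2)) := by
  fun_prop

lemma integrable_sqrtA (z : ℝ) (a b : ℝ) :
    IntervalIntegrable (fun k => Real.sqrt (1 - z ^ 2 * sin k ^ 2)) MeasureTheory.volume a b :=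
  cont_sqrtA.intervalIntegrable a b

/-- the integrand difference identity -/
lemma diff_eq {z : ℝ} (hz : z ∈ Set.Ioo (0:ℝ) 1) {k : ℝ} (hk : k ∈ Set.Icc 0 (π/2)) :
    Real.sqrt (1 - z ^ 2 * sin k ^ 2) - cos k
      = (1 - z ^ 2) * sin k ^ 2 / (Real.sqrt (1 - z ^ 2 * sin k ^ 2) + cos k) := by
  have hA : 0 < 1 - z ^ 2 * sin k ^ 2 := A_pos hz k
  have hcos : 0 ≤ cos k := cos_nonneg_of_mem_Icc ⟨by linarith [hk.1, pi_pos], hk.2⟩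
  have hs : 0 < Real.sqrt (1 - z ^ 2 * sin k ^ 2) := Real.sqrt_pos.mpr hA
  have hD : 0 < Real.sqrt (1 - z ^ 2 * sin k ^ 2) + cos k := by linarith
  rw [eq_div_iff hD.ne']
  have hsq : Real.sqrt (1 - z ^ 2 * sin k ^ 2) ^ 2 = 1 - z ^ 2 * sin k ^ 2 :=
    Real.sq_sqrt hA.le
  have hpyth := sin_sq_add_cos_sq k
  nlinarith [hsq]

lemma ellipticE_sub_one (z : ℝ) :
    ellipticE z - 1 = ∫ k in (0:ℝ)..(π/2), (Real.sqrt (1 - z ^ 2 * sin k ^ 2) - cos k) := by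
  rw [intervalIntegral.integral_sub (integrable_sqrtA z 0 (π/2))
    (Continuous.intervalIntegrable continuous_cos 0 (π/2))]
  simp [ellipticE, integral_cos]

/-- lower bound for sqrt A: ε + cos k ≤ stuff -/
lemma sqrtA_ge {z : ℝ} (hz : z ∈ Set.Ioo (0:ℝ) 1) (k : ℝ) :
    Real.sqrt (1 - z^2) ≤ Real.sqrt (1 - z ^ 2 * sin k ^ 2) := by
  apply Real.sqrt_le_sqrt
  nlinarith [sq_nonneg (cos k), A_eq z k, sq_nonneg z]

lemma sqrtA_le {z : ℝ} (hz : z ∈ Set.Ioo (0:ℝ) 1) {k : ℝ} (hk : k ∈ Set.Icc 0 (π/2)) :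
    Real.sqrt (1 - z ^ 2 * sin k ^ 2) ≤ Real.sqrt (1 - z^2) + cos k := by
  obtain ⟨h0, h1⟩ := hz
  have hz2 : z^2 < 1 := by nlinarith
  have hcos : 0 ≤ cos k := cos_nonneg_of_mem_Icc ⟨by linarith [hk.1, pi_pos], hk.2⟩
  have hε : 0 ≤ Real.sqrt (1 - z^2) := Real.sqrt_nonneg _
  have hsq : Real.sqrt (1 - z^2) ^ 2 = 1 - z^2 := Real.sq_sqrt (by linarith)
  have key : 1 - z ^ 2 * sin k ^ 2 ≤ (Real.sqrt (1 - z^2) + cos k)^2 := by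
    have : z^2 * cos k ^2 ≤ cos k ^ 2 := by nlinarith [sq_nonneg (cos k)]
    nlinarith [A_eq z k, mul_nonneg hε hcos]
  calc Real.sqrt (1 - z ^ 2 * sin k ^ 2) ≤ Real.sqrt ((Real.sqrt (1 - z^2) + cos k)^2) :=
        Real.sqrt_le_sqrt key
    _ = Real.sqrt (1 - z^2) + cos k := Real.sqrt_sq (by linarith)


lemma f_nonneg {z : ℝ} (hz : z ∈ Set.Ioo (0:ℝ) 1) {k : ℝ} (hk : k ∈ Set.Icc 0 (π/2)) :
    0 ≤ Real.sqrt (1 - z ^ 2 * sin k ^ 2) - cos k := by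
  have hcos : 0 ≤ cos k := cos_nonneg_of_mem_Icc ⟨by linarith [hk.1, pi_pos], hk.2⟩
  have h1 : cos k = Real.sqrt (cos k ^ 2) := (Real.sqrt_sq hcos).symm
  have h2 : cos k ^ 2 ≤ 1 - z ^ 2 * sin k ^ 2 := by
    have hp := sin_sq_add_cos_sq k
    have hz2 : z^2 ≤ 1 := by nlinarith [hz.1, hz.2]
    nlinarith [mul_le_mul_of_nonneg_right hz2 (sq_nonneg (sin k))]
  rw [h1]
  have := Real.sqrt_le_sqrt h2
  linarith

lemma one_le_ellipticE {z : ℝ} (hz : z ∈ Set.Ioo (0:ℝ) 1) : 1 ≤ ellipticE z := by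
  have h := ellipticE_sub_one z
  have : 0 ≤ ∫ k in (0:ℝ)..(π/2), (Real.sqrt (1 - z ^ 2 * sin k ^ 2) - cos k) := by
    apply intervalIntegral.integral_nonneg (by positivity)
    intro k hk
    exact f_nonneg hz hk
  linarith

lemma eps_pos {z : ℝ} (hz : z ∈ Set.Ioo (0:ℝ) 1) : 0 < Real.sqrt (1 - z^2) := by
  have : 0 < 1 - z^2 := by nlinarith [hz.1, hz.2]
  exact Real.sqrt_pos.mpr this

/-- lower bound -/
lemma lower_bound {z : ℝ} (hz : z ∈ Set.Ioo (0:ℝ) 1) :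
    (1 - z^2)/4 * (Real.log (Real.sqrt (1 - z^2) + π/4) - Real.log (Real.sqrt (1 - z^2)))
      ≤ ellipticE z - 1 := by
  obtain ⟨h0, h1⟩ := hz
  set ε := Real.sqrt (1 - z^2) with hε
  have hεpos : 0 < ε := eps_pos ⟨h0, h1⟩
  have hz2 : 0 < 1 - z^2 := by nlinarith
  rw [ellipticE_sub_one]
  set f := fun k => Real.sqrt (1 - z ^ 2 * sin k ^ 2) - cos k with hf
  have hfc : Continuous f := by rw [hf]; fun_prop
  have hsplit : (∫ k in (0:ℝ)..(π/2), f k)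
      = (∫ k in (0:ℝ)..(π/4), f k) + ∫ k in (π/4:ℝ)..(π/2), f k :=
    (intervalIntegral.integral_add_adjacent_intervals
      (hfc.intervalIntegrable _ _) (hfc.intervalIntegrable _ _)).symm
  have h1' : 0 ≤ ∫ k in (0:ℝ)..(π/4), f k := by
    apply intervalIntegral.integral_nonneg (by positivity)
    intro k hk
    refine f_nonneg ⟨h0, h1⟩ ⟨hk.1, le_trans hk.2 (by linarith [pi_pos])⟩
  set g := fun k : ℝ => (1 - z^2) / (4 * (ε + (π/2 - k))) with hg
  have hgc : ContinuousOn g (Set.uIcc (π/4) (π/2)) := by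
    rw [Set.uIcc_of_le (by linarith [pi_pos])]
    apply ContinuousOn.div continuousOn_const (by fun_prop)
    intro k hk
    have : 0 < ε + (π/2 - k) := by
      rcases hk with ⟨hk1, hk2⟩
      have : π/2 - k ≥ 0 := by linarith
      linarith
    positivity
  have h2' : (∫ k in (π/4:ℝ)..(π/2), g k) ≤ ∫ k in (π/4:ℝ)..(π/2), f k := by
    apply intervalIntegral.integral_mono_on (by linarith [pi_pos])
      hgc.intervalIntegrable
      (hfc.intervalIntegrable _ _)
    intro k hk
    obtain ⟨hk1, hk2⟩ := hk
    have hk0 : (0:ℝ) ≤ k := le_trans (by positivity) hk1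
    have hkIcc : k ∈ Set.Icc (0:ℝ) (π/2) := ⟨hk0, hk2⟩
    show g k ≤ f k
    simp only [hf, hg]
    rw [diff_eq ⟨h0, h1⟩ hkIcc]
    have hcos : 0 ≤ cos k := cos_nonneg_of_mem_Icc ⟨by linarith [pi_pos], hk2⟩
    have hcosle : cos k ≤ π/2 - k := by
      have := Real.sin_le (show (0:ℝ) ≤ π/2 - k by linarith)
      rwa [Real.sin_pi_div_two_sub] at this
    -- sin² ≥ 1/2 on [π/4, π/2]
    have hcos4 : cos k ≤ cos (π/4) :=
      Real.cos_le_cos_of_nonneg_of_le_pi (by positivity) (by linarith [pi_pos]) hk1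
    have hcossq : cos k ^ 2 ≤ 1/2 := by
      rw [Real.cos_pi_div_four] at hcos4
      nlinarith [Real.sq_sqrt (by norm_num : (2:ℝ) ≥ 0), Real.sqrt_nonneg 2]
    have hsinsq : 1/2 ≤ sin k ^ 2 := by nlinarith [sin_sq_add_cos_sq k]
    -- denominators
    have hDle : Real.sqrt (1 - z ^ 2 * sin k ^ 2) + cos k ≤ 2 * (ε + (π/2 - k)) := by
      have := sqrtA_le ⟨h0, h1⟩ hkIcc
      linarith [hεpos]
    have hDpos : 0 < Real.sqrt (1 - z ^ 2 * sin k ^ 2) + cos k := by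
      have := Real.sqrt_pos.mpr (A_pos ⟨h0, h1⟩ k)
      linarith
    have hupos : 0 < ε + (π/2 - k) := by linarith [hεpos]
    rw [div_le_div_iff₀ (by positivity) hDpos]
    nlinarith [mul_le_mul_of_nonneg_left hDle (le_of_lt hz2),
      mul_nonneg (mul_nonneg (le_of_lt hz2) hupos.le)
        (show (0:ℝ) ≤ 2 * sin k ^ 2 - 1 by linarith)]
  -- compute the g integral
  have hcomp : (∫ k in (π/4:ℝ)..(π/2), g k)
      = (1 - z^2)/4 * (Real.log (ε + π/4) - Real.log ε) := by
    have e1 : (∫ k in (π/4:ℝ)..(π/2), g k)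
        = (1 - z^2)/4 * ∫ k in (π/4:ℝ)..(π/2), (ε + (π/2 - k))⁻¹ := by
      rw [← intervalIntegral.integral_const_mul]
      apply intervalIntegral.integral_congr
      intro k hk
      rw [hg]
      field_simp
    rw [e1]
    congr 1
    have e2 : (∫ k in (π/4:ℝ)..(π/2), (ε + (π/2 - k))⁻¹)
        = ∫ x in (0:ℝ)..(π/4), (ε + x)⁻¹ := by
      have := intervalIntegral.integral_comp_sub_left (a := π/4) (b := π/2)
        (fun x => (ε + x)⁻¹) (π/2)
      simpa [show π/2 - π/2 = (0:ℝ) by ring, show π/2 - π/4 = π/4 by ring] using this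
    rw [e2]
    have e3 : (∫ x in (0:ℝ)..(π/4), (ε + x)⁻¹) = ∫ y in ε..(ε + π/4), y⁻¹ := by
      have := intervalIntegral.integral_comp_add_left (a := (0:ℝ)) (b := π/4)
        (fun y => y⁻¹) ε
      simpa using this
    rw [e3, integral_inv_of_pos hεpos (by linarith [pi_pos, hεpos]),
      Real.log_div (by linarith [pi_pos, hεpos]) hεpos.ne']
  calc (1 - z^2)/4 * (Real.log (ε + π/4) - Real.log ε)
      = ∫ k in (π/4:ℝ)..(π/2), g k := hcomp.symm
    _ ≤ ∫ k in (π/4:ℝ)..(π/2), f k := h2'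
    _ ≤ (∫ k in (0:ℝ)..(π/4), f k) + ∫ k in (π/4:ℝ)..(π/2), f k := by linarith
    _ = ∫ k in (0:ℝ)..(π/2), f k := hsplit.symm

/-- upper bound -/
lemma upper_bound {z : ℝ} (hz : z ∈ Set.Ioo (0:ℝ) 1) :
    ellipticE z - 1 ≤
      (1 - z^2) * (π/2) * (Real.log (Real.sqrt (1 - z^2) + 1) - Real.log (Real.sqrt (1 - z^2))) := by
  obtain ⟨h0, h1⟩ := hz
  set ε := Real.sqrt (1 - z^2) with hε
  have hεpos : 0 < ε := eps_pos ⟨h0, h1⟩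
  have hz2 : 0 < 1 - z^2 := by nlinarith
  rw [ellipticE_sub_one]
  set f := fun k => Real.sqrt (1 - z ^ 2 * sin k ^ 2) - cos k with hf
  have hfc : Continuous f := by rw [hf]; fun_prop
  set g := fun k : ℝ => (1 - z^2) / (ε + (2/π) * (π/2 - k)) with hg
  have hgpos : ∀ k ∈ Set.Icc (0:ℝ) (π/2), 0 < ε + (2/π) * (π/2 - k) := by
    intro k hk
    have : 0 ≤ (2/π) * (π/2 - k) := by
      have := pi_pos
      have : π/2 - k ≥ 0 := by linarith [hk.2]
      positivity
    linarith
  have hgc : ContinuousOn g (Set.uIcc (0:ℝ) (π/2)) := by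
    rw [Set.uIcc_of_le (by linarith [pi_pos])]
    apply ContinuousOn.div continuousOn_const (by fun_prop)
    intro k hk
    exact (hgpos k hk).ne'
  have hmono : (∫ k in (0:ℝ)..(π/2), f k) ≤ ∫ k in (0:ℝ)..(π/2), g k := by
    apply intervalIntegral.integral_mono_on (by linarith [pi_pos])
      (hfc.intervalIntegrable _ _)
      hgc.intervalIntegrable
    intro k hk
    obtain ⟨hk1, hk2⟩ := hk
    show f k ≤ g k
    simp only [hf, hg]
    rw [diff_eq ⟨h0, h1⟩ ⟨hk1, hk2⟩]
    have hcos : 0 ≤ cos k := cos_nonneg_of_mem_Icc ⟨by linarith [pi_pos], hk2⟩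
    have hcosge : (2/π) * (π/2 - k) ≤ cos k := by
      have := Real.one_sub_mul_le_cos hk1 hk2
      have hπ := pi_pos
      have : 1 - 2/π * k ≤ cos k := this
      have he : (2/π) * (π/2 - k) = 1 - 2/π * k := by
        have hπ := pi_pos
        field_simp
      linarith [he ▸ this]
    have hDge : ε + (2/π) * (π/2 - k) ≤ Real.sqrt (1 - z ^ 2 * sin k ^ 2) + cos k := by
      have := sqrtA_ge ⟨h0, h1⟩ k
      linarith
    have hDpos : 0 < ε + (2/π) * (π/2 - k) := hgpos k ⟨hk1, hk2⟩
    have hDpos2 : 0 < Real.sqrt (1 - z ^ 2 * sin k ^ 2) + cos k := by linarith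
    have hsin1 : sin k ^ 2 ≤ 1 := sin_sq_le_one k
    rw [div_le_div_iff₀ hDpos2 hDpos]
    nlinarith [mul_le_mul_of_nonneg_left hDge (le_of_lt hz2),
      mul_nonneg (mul_nonneg (le_of_lt hz2) hDpos.le)
        (show (0:ℝ) ≤ 1 - sin k ^ 2 by linarith)]
  have hcomp : (∫ k in (0:ℝ)..(π/2), g k)
      = (1 - z^2) * (π/2) * (Real.log (ε + 1) - Real.log ε) := by
    have e1 : (∫ k in (0:ℝ)..(π/2), g k)
        = (1 - z^2) * ∫ k in (0:ℝ)..(π/2), (ε + (2/π) * (π/2 - k))⁻¹ := by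
      rw [← intervalIntegral.integral_const_mul]
      apply intervalIntegral.integral_congr
      intro k hk
      rw [hg]
      field_simp
    rw [e1]
    have e2 : (∫ k in (0:ℝ)..(π/2), (ε + (2/π) * (π/2 - k))⁻¹)
        = ∫ x in (0:ℝ)..(π/2), (ε + (2/π) * x)⁻¹ := by
      have := intervalIntegral.integral_comp_sub_left (a := (0:ℝ)) (b := π/2)
        (fun x => (ε + (2/π) * x)⁻¹) (π/2)
      simpa [show π/2 - π/2 = (0:ℝ) by ring] using this
    have e3 : (∫ x in (0:ℝ)..(π/2), (ε + (2/π) * x)⁻¹)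
        = (2/π)⁻¹ * ∫ y in (0:ℝ)..(1:ℝ), (ε + y)⁻¹ := by
      have hπ := pi_pos
      have hc : (2/π) ≠ 0 := by positivity
      have := intervalIntegral.integral_comp_mul_left (a := (0:ℝ)) (b := π/2)
        (fun y => (ε + y)⁻¹) hc
      rw [this, smul_eq_mul]
      congr 1
      rw [show (2/π) * (0:ℝ) = 0 by ring, show (2/π) * (π/2) = 1 by field_simp]
    have e4 : (∫ y in (0:ℝ)..(1:ℝ), (ε + y)⁻¹) = Real.log (ε + 1) - Real.log ε := by
      have := intervalIntegral.integral_comp_add_left (a := (0:ℝ)) (b := (1:ℝ))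
        (fun y => y⁻¹) ε
      simp only [add_zero] at this
      rw [this, integral_inv_of_pos hεpos (by linarith), Real.log_div (by linarith) hεpos.ne']
    rw [e2, e3, e4]
    have hπ := pi_pos
    field_simp
  calc (∫ k in (0:ℝ)..(π/2), f k) ≤ ∫ k in (0:ℝ)..(π/2), g k := hmono
    _ = (1 - z^2) * (π/2) * (Real.log (ε + 1) - Real.log ε) := hcomp

open Filter Topology

lemma h01 : ∀ᶠ z in nhdsWithin (1:ℝ) (Set.Iio 1), z ∈ Set.Ioo (0:ℝ) 1 :=
  Ioo_mem_nhdsLT_of_mem (by norm_num : (1:ℝ) ∈ Set.Ioc (0:ℝ) 1)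

lemma tendsto_logeps :
    Tendsto (fun z : ℝ => Real.log (Real.sqrt (1 - z^2))) (nhdsWithin 1 (Set.Iio 1)) atBot := by
  have h1 : Tendsto (fun z : ℝ => Real.sqrt (1 - z^2)) (nhdsWithin 1 (Set.Iio 1))
      (nhdsWithin 0 (Set.Ioi 0)) := by
    rw [tendsto_nhdsWithin_iff]
    constructor
    · have hc : Continuous (fun z : ℝ => Real.sqrt (1 - z^2)) := by fun_prop
      have := hc.tendsto 1
      simp only [one_pow, sub_self, Real.sqrt_zero] at this
      exact this.mono_left nhdsWithin_le_nhds
    · filter_upwards [h01] with z hz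
      exact eps_pos hz
  exact Real.tendsto_log_nhdsGT_zero.comp h1

lemma tendsto_ratio_atTop :
    Tendsto (fun z : ℝ => (ellipticE z - 1) / (1 - z)) (nhdsWithin 1 (Set.Iio 1)) atTop := by
  have hB : Tendsto (fun z : ℝ => (Real.log (π/4) - Real.log (Real.sqrt (1 - z^2))) / 4)
      (nhdsWithin 1 (Set.Iio 1)) atTop := by
    apply Tendsto.atTop_div_const (by norm_num : (0:ℝ) < 4)
    apply tendsto_atTop_add_const_left
    exact tendsto_neg_atBot_atTop.comp tendsto_logeps
  apply tendsto_atTop_mono' _ _ hB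
  filter_upwards [h01] with z hz
  obtain ⟨h0, h1⟩ := hz
  set ε := Real.sqrt (1 - z^2) with hε
  have hεpos : 0 < ε := eps_pos ⟨h0, h1⟩
  have hΔ : 0 ≤ Real.log (ε + π/4) - Real.log ε := by
    have := Real.log_le_log hεpos (by linarith [pi_pos] : ε ≤ ε + π/4)
    linarith
  have hπ4 : Real.log (π/4) ≤ Real.log (ε + π/4) :=
    Real.log_le_log (by positivity) (by linarith)
  have hz1 : 0 < 1 - z := by linarith
  have hlow := lower_bound ⟨h0, h1⟩
  have key : (1 - z^2)/4 * (Real.log (ε + π/4) - Real.log ε) / (1 - z)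
      = (1 + z)/4 * (Real.log (ε + π/4) - Real.log ε) := by
    field_simp
    ring
  calc (Real.log (π/4) - Real.log ε) / 4
      ≤ (Real.log (ε + π/4) - Real.log ε) / 4 := by linarith
    _ ≤ (1 + z)/4 * (Real.log (ε + π/4) - Real.log ε) := by nlinarith
    _ = (1 - z^2)/4 * (Real.log (ε + π/4) - Real.log ε) / (1 - z) := key.symm
    _ ≤ (ellipticE z - 1) / (1 - z) := (div_le_div_iff_of_pos_right hz1).mpr hlow

lemma delta_log_tendsto (m : ℕ) :
    Tendsto (fun δ : ℝ => δ * (1 - Real.log δ)^m) (nhdsWithin 0 (Set.Ioi 0)) (nhds 0) := by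
  have hg : Tendsto (fun t : ℝ => (1 + t)^m * Real.exp (-t)) atTop (nhds 0) := by
    have base := tendsto_pow_mul_exp_neg_atTop_nhds_zero m
    have hshift : Tendsto (fun t : ℝ => 1 + t) atTop atTop :=
      tendsto_atTop_add_const_left _ _ tendsto_id
    have hcomp := base.comp hshift
    have heq : ∀ t : ℝ, (1 + t)^m * Real.exp (-t)
        = Real.exp 1 * ((1 + t)^m * Real.exp (-(1 + t))) := by
      intro t
      rw [show (-t : ℝ) = 1 + (-(1 + t)) by ring, Real.exp_add]
      ring
    have := hcomp.const_mul (Real.exp 1)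
    simp only [mul_zero] at this
    exact Tendsto.congr (fun t => (heq t).symm) this
  have hmap : Tendsto (fun δ : ℝ => -Real.log δ) (nhdsWithin 0 (Set.Ioi 0)) atTop :=
    tendsto_neg_atBot_atTop.comp Real.tendsto_log_nhdsGT_zero
  have hcomp := hg.comp hmap
  apply hcomp.congr'
  filter_upwards [self_mem_nhdsWithin] with δ (hδ : 0 < δ)
  simp only [Function.comp_apply]
  rw [neg_neg, Real.exp_log hδ]
  ring

lemma tendsto_pow_ratio (k : ℕ) :
    Tendsto (fun z : ℝ => (ellipticE z - 1)^(k+1) / (1 - z)^k)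
      (nhdsWithin 1 (Set.Iio 1)) (nhds 0) := by
  -- upper bound: E-1 ≤ π (1-z)(1 - log(1-z))
  have hub : ∀ᶠ z in nhdsWithin (1:ℝ) (Set.Iio 1),
      0 ≤ ellipticE z - 1 ∧ ellipticE z - 1 ≤ π * ((1-z) * (1 - Real.log (1-z))) := by
    filter_upwards [h01] with z hz
    obtain ⟨h0, h1⟩ := hz
    have hE1 := one_le_ellipticE ⟨h0, h1⟩
    refine ⟨by linarith, ?_⟩
    have hup := upper_bound ⟨h0, h1⟩
    set ε := Real.sqrt (1 - z^2) with hε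
    have hεpos : 0 < ε := eps_pos ⟨h0, h1⟩
    have hz2 : 0 < 1 - z^2 := by nlinarith
    have hz1 : 0 < 1 - z := by linarith
    have hε1 : ε ≤ 1 := by
      rw [hε]
      exact Real.sqrt_le_one.mpr (by nlinarith)
    have hlogε : Real.log ε = Real.log (1 - z^2) / 2 := Real.log_sqrt hz2.le
    have hloggr : Real.log (1-z) ≤ Real.log (1 - z^2) :=
      Real.log_le_log hz1 (by nlinarith)
    have hlog1z : Real.log (1-z) ≤ 0 :=
      Real.log_nonpos (by linarith) (by linarith)
    have hΔub : Real.log (ε + 1) - Real.log ε ≤ 1 - Real.log (1-z) := by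
      have h2 : Real.log (ε + 1) ≤ Real.log 2 := Real.log_le_log (by linarith) (by linarith)
      have hl2 : Real.log 2 ≤ 1 := by
        calc Real.log 2 ≤ Real.log (Real.exp 1) :=
          Real.log_le_log (by norm_num) (by linarith [Real.add_one_le_exp 1])
        _ = 1 := Real.log_exp 1
      have : -Real.log ε = -(Real.log (1 - z^2)/2) := by rw [hlogε]
      nlinarith [hloggr, hlog1z]
    have h1z2 : 1 - z^2 ≤ 2 * (1-z) := by nlinarith
    have hΔpos : 0 ≤ Real.log (ε + 1) - Real.log ε := by
      have := Real.log_le_log hεpos (by linarith : ε ≤ ε + 1)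
      linarith
    calc ellipticE z - 1 ≤ (1 - z^2) * (π/2) * (Real.log (ε + 1) - Real.log ε) := hup
      _ ≤ 2*(1-z) * (π/2) * (1 - Real.log (1-z)) := by
          have hpos1 : (0:ℝ) ≤ π/2 := by positivity
          have e1 : (1 - z^2) * (π/2) * (Real.log (ε + 1) - Real.log ε)
              ≤ 2*(1-z) * (π/2) * (Real.log (ε + 1) - Real.log ε) := by
            apply mul_le_mul_of_nonneg_right _ hΔpos
            apply mul_le_mul_of_nonneg_right h1z2 hpos1
          have e2 : 2*(1-z) * (π/2) * (Real.log (ε + 1) - Real.log ε)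
              ≤ 2*(1-z) * (π/2) * (1 - Real.log (1-z)) := by
            apply mul_le_mul_of_nonneg_left hΔub (by positivity)
          linarith
      _ = π * ((1-z) * (1 - Real.log (1-z))) := by ring
  -- the majorant tends to 0
  have hmaj : Tendsto (fun z : ℝ => π^(k+1) * ((1-z) * (1 - Real.log (1-z))^(k+1)))
      (nhdsWithin 1 (Set.Iio 1)) (nhds 0) := by
    have hd : Tendsto (fun z : ℝ => 1 - z) (nhdsWithin 1 (Set.Iio 1))
        (nhdsWithin 0 (Set.Ioi 0)) := by
      rw [tendsto_nhdsWithin_iff]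
      refine ⟨?_, ?_⟩
      · have hc : Continuous (fun z : ℝ => 1 - z) := by fun_prop
        have h3 : Tendsto (fun z : ℝ => 1 - z) (nhds 1) (nhds 0) := by
          have := hc.tendsto (1:ℝ)
          simpa using this
        exact h3.mono_left nhdsWithin_le_nhds
      · filter_upwards [self_mem_nhdsWithin] with z (hz : z < 1)
        simpa using hz
    have := (delta_log_tendsto (k+1)).comp hd
    have h2 := this.const_mul (π^(k+1))
    simpa using h2
  apply squeeze_zero_norm' _ hmaj
  filter_upwards [hub, h01] with z ⟨hnn, hle⟩ hz
  obtain ⟨h0, h1⟩ := hz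
  have hz1 : 0 < 1 - z := by linarith
  rw [Real.norm_eq_abs, abs_of_nonneg (by positivity)]
  rw [div_le_iff₀ (by positivity : (0:ℝ) < (1-z)^k)]
  have hpow : (ellipticE z - 1)^(k+1) ≤ (π * ((1-z) * (1 - Real.log (1-z))))^(k+1) :=
    pow_le_pow_left₀ hnn hle (k+1)
  have hlog1z : Real.log (1-z) ≤ 0 := Real.log_nonpos (by linarith) (by linarith)
  calc (ellipticE z - 1)^(k+1) ≤ (π * ((1-z) * (1 - Real.log (1-z))))^(k+1) := hpow
    _ = π^(k+1) * ((1-z) * (1 - Real.log (1-z))^(k+1)) * (1-z)^k := by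
        rw [mul_pow, mul_pow, pow_succ]
        ring
    _ ≤ π^(k+1) * ((1-z) * (1 - Real.log (1-z))^(k+1)) * (1-z)^k := le_refl _



open Filter Topology Set intervalIntegral


def Fc (z : ℂ) : ℂ :=
  ∫ k in (0:ℝ)..(π/2), (1 - z^2 * ((Real.sin k : ℝ) : ℂ)^2) ^ (1/2 : ℂ)

lemma base_re_pos' {z : ℂ} (hz : ‖z‖ < 1) {s : ℝ} (hs : s^2 ≤ 1) :
    1 - ‖z‖ ^ 2 ≤ (1 - z^2 * ((s : ℝ) : ℂ)^2).re := by
  have h1 : ((s : ℝ) : ℂ)^2 = ((s^2 : ℝ) : ℂ) := by push_cast; ring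
  rw [h1]
  have h2 : (1 - z^2 * ((s^2 : ℝ) : ℂ)).re = 1 - (z^2).re * s^2 := by
    simp [Complex.sub_re, Complex.mul_re, ← Complex.ofReal_pow, Complex.ofReal_re, Complex.ofReal_im]
  rw [h2]
  have h3 : (z^2).re ≤ ‖z^2‖ := Complex.re_le_norm _
  have h4 : ‖z^2‖ = ‖z‖ ^ 2 := by rw [norm_pow]
  nlinarith [sq_nonneg s, norm_nonneg z, sq_nonneg (‖z‖),
    mul_le_mul_of_nonneg_right (h3.trans_eq h4) (sq_nonneg s),
    mul_le_mul_of_nonneg_left hs (sq_nonneg (‖z‖))]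

lemma base_re_pos {z : ℂ} (hz : ‖z‖ < 1) (k : ℝ) :
    0 < (1 - z^2 * ((Real.sin k : ℝ) : ℂ)^2).re := by
  have := base_re_pos' hz (Real.sin_sq_le_one k)
  have h6 : ‖z‖ ^ 2 < 1 := by nlinarith [norm_nonneg z]
  linarith

lemma base_ne_zero {z : ℂ} (hz : ‖z‖ < 1) (k : ℝ) :
    (1 - z^2 * ((Real.sin k : ℝ) : ℂ)^2) ≠ 0 := by
  intro h
  have := base_re_pos hz k
  rw [h] at this
  simp at this

lemma base_slit {z : ℂ} (hz : ‖z‖ < 1) (k : ℝ) :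
    (1 - z^2 * ((Real.sin k : ℝ) : ℂ)^2) ∈ Complex.slitPlane :=
  Or.inl (base_re_pos hz k)

lemma base_abs_ge {z : ℂ} (hz : ‖z‖ < 1) (k : ℝ) :
    1 - ‖z‖ ^ 2 ≤ ‖1 - z^2 * ((Real.sin k : ℝ) : ℂ)^2‖ := by
  have h1 := base_re_pos' hz (Real.sin_sq_le_one k)
  have h2 := Complex.re_le_norm (1 - z^2 * ((Real.sin k : ℝ) : ℂ)^2)
  linarith

lemma hasDerivAt_integrand {z : ℂ} (hz : ‖z‖ < 1) (k : ℝ) :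
    HasDerivAt (fun w : ℂ => (1 - w^2 * ((Real.sin k : ℝ) : ℂ)^2) ^ (1/2 : ℂ))
      ((1/2 : ℂ) * (1 - z^2 * ((Real.sin k : ℝ) : ℂ)^2) ^ ((1/2 : ℂ) - 1)
        * (-(2 * z * ((Real.sin k : ℝ) : ℂ)^2))) z := by
  have hinner : HasDerivAt (fun w : ℂ => 1 - w^2 * ((Real.sin k : ℝ) : ℂ)^2)
      (-(2 * z * ((Real.sin k : ℝ) : ℂ)^2)) z := by
    have h := ((hasDerivAt_pow 2 z).mul_const (((Real.sin k : ℝ) : ℂ)^2)).const_sub 1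
    convert h using 1
    · rfl
    · rfl
    simp
  exact hinner.cpow_const (base_slit hz k)

lemma continuous_integrand {z : ℂ} (hz : ‖z‖ < 1) :
    Continuous (fun k : ℝ => (1 - z^2 * ((Real.sin k : ℝ) : ℂ)^2) ^ (1/2 : ℂ)) := by
  apply Continuous.cpow _ continuous_const
  · intro k
    exact base_slit hz k
  · fun_prop

lemma norm_deriv_bound {z : ℂ} (hz : ‖z‖ < 1) (k : ℝ) :
    ‖(1/2 : ℂ) * (1 - z^2 * ((Real.sin k : ℝ) : ℂ)^2) ^ ((1/2 : ℂ) - 1)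
        * (-(2 * z * ((Real.sin k : ℝ) : ℂ)^2))‖
      ≤ (Real.sqrt (1 - ‖z‖ ^ 2))⁻¹ := by
  have habs : 0 < 1 - ‖z‖ ^ 2 := by nlinarith [norm_nonneg z]
  set w := 1 - z^2 * ((Real.sin k : ℝ) : ℂ)^2 with hw
  have hw0 : w ≠ 0 := base_ne_zero hz k
  have hwge : 1 - ‖z‖ ^ 2 ≤ ‖w‖ := base_abs_ge hz k
  have hcpow : ‖w ^ ((1/2 : ℂ) - 1)‖ = ‖w‖ ^ (-(1/2) : ℝ) := by
    rw [Complex.norm_cpow_of_ne_zero hw0]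
    have h1 : ((1/2 : ℂ) - 1).re = (-(1/2) : ℝ) := by norm_num
    have h2 : ((1/2 : ℂ) - 1).im = 0 := by norm_num
    rw [h1, h2]
    simp
  have hwpos : 0 < ‖w‖ := lt_of_lt_of_le habs hwge
  have hrw : ‖w‖ ^ (-(1/2) : ℝ) ≤ (1 - ‖z‖ ^ 2) ^ (-(1/2) : ℝ) :=
    Real.rpow_le_rpow_of_nonpos habs hwge (by norm_num)
  have hsin : ‖((Real.sin k : ℝ) : ℂ)^2‖ ≤ 1 := by
    rw [norm_pow, Complex.norm_real, Real.norm_eq_abs]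
    have := Real.sin_sq_le_one k
    nlinarith [abs_nonneg (Real.sin k), sq_abs (Real.sin k)]
  have hrpow_sqrt : (1 - ‖z‖ ^ 2) ^ (-(1/2) : ℝ)
      = (Real.sqrt (1 - ‖z‖ ^ 2))⁻¹ := by
    rw [Real.rpow_neg habs.le, Real.sqrt_eq_rpow]
  calc ‖(1/2 : ℂ) * w ^ ((1/2 : ℂ) - 1) * (-(2 * z * ((Real.sin k : ℝ) : ℂ)^2))‖
      = (1/2) * ‖w ^ ((1/2 : ℂ) - 1)‖
          * (2 * ‖z‖ * ‖((Real.sin k : ℝ) : ℂ)^2‖) := by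
        simp [map_mul, abs_mul]
    _ ≤ (1/2) * ((1 - ‖z‖ ^ 2) ^ (-(1/2) : ℝ)) * (2 * 1 * 1) := by
        apply mul_le_mul
        · exact mul_le_mul_of_nonneg_left (hcpow ▸ hrw) (by norm_num)
        · have h0 : (0:ℝ) ≤ ‖z‖ := norm_nonneg z
          nlinarith [hsin, norm_nonneg (((Real.sin k : ℝ) : ℂ)^2)]
        · positivity
        · positivity
    _ = (1 - ‖z‖ ^ 2) ^ (-(1/2) : ℝ) := by ring
    _ = (Real.sqrt (1 - ‖z‖ ^ 2))⁻¹ := hrpow_sqrt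

lemma A_pos' {z : ℝ} (hz : z ∈ Set.Ioo (0:ℝ) 1) (k : ℝ) :
    0 < 1 - z ^ 2 * Real.sin k ^ 2 := by
  obtain ⟨h0, h1⟩ := hz
  nlinarith [Real.sin_sq_le_one k, sq_nonneg (z * Real.sin k), sq_nonneg (Real.sin k)]

set_option maxHeartbeats 2000000 in
lemma differentiableAt_Fc {w : ℂ} (hw : ‖w‖ < 1) : DifferentiableAt ℂ Fc w := by
  set ε : ℝ := (1 - ‖w‖)/2 with hε
  have hεpos : 0 < ε := by
    rw [hε]; linarith
  set ρ : ℝ := ‖w‖ + ε with hρdef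
  have hρ1 : ρ < 1 := by rw [hρdef, hε]; linarith
  have hρ0 : 0 ≤ ρ := by positivity
  have hball : ∀ x ∈ Metric.ball w ε, ‖x‖ < 1 ∧ ‖x‖ ≤ ρ := by
    intro x hx
    rw [Metric.mem_ball, Complex.dist_eq] at hx
    have h1 : ‖x‖ ≤ ‖w‖ + ‖x - w‖ := by
      have h := norm_sub_norm_le x w
      linarith
    have h2 : ‖x‖ ≤ ρ := by
      rw [hρdef]
      linarith [hx, h1]
    exact ⟨lt_of_le_of_lt h2 hρ1, h2⟩
  have hρ2 : 0 < 1 - ρ^2 := by nlinarith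
  have hmeas : ∀ᶠ x : ℂ in nhds w, MeasureTheory.AEStronglyMeasurable
      (fun k : ℝ => (1 - x^2 * ((Real.sin k : ℝ) : ℂ)^2) ^ (1/2 : ℂ))
      (MeasureTheory.volume.restrict (Set.uIoc (0:ℝ) (π/2))) := by
    have hev : ∀ᶠ x : ℂ in nhds w, ‖x‖ < 1 := by
      have hc : Continuous (fun x : ℂ => ‖x‖) := continuous_norm
      exact (hc.tendsto w).eventually (eventually_lt_nhds hw)
    filter_upwards [hev] with x hx
    exact (continuous_integrand hx).aestronglyMeasurable.restrict
  have hint : IntervalIntegrable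
      (fun k : ℝ => (1 - w^2 * ((Real.sin k : ℝ) : ℂ)^2) ^ (1/2 : ℂ))
      MeasureTheory.volume 0 (π/2) := (continuous_integrand hw).intervalIntegrable _ _
  have hmeas' : MeasureTheory.AEStronglyMeasurable
      (fun k : ℝ => (1/2 : ℂ) * (1 - w^2 * ((Real.sin k : ℝ) : ℂ)^2) ^ ((1/2 : ℂ) - 1)
        * (-(2 * w * ((Real.sin k : ℝ) : ℂ)^2)))
      (MeasureTheory.volume.restrict (Set.uIoc (0:ℝ) (π/2))) := by
    apply Continuous.aestronglyMeasurable ?_ |>.restrict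
    apply Continuous.mul
    apply Continuous.mul continuous_const
    · apply Continuous.cpow _ continuous_const
      · intro k
        exact base_slit hw k
      · fun_prop
    · fun_prop
  have hbound : ∀ᵐ k : ℝ ∂MeasureTheory.volume, k ∈ Set.uIoc (0:ℝ) (π/2) →
      ∀ x ∈ Metric.ball w ε,
        ‖(1/2 : ℂ) * (1 - x^2 * ((Real.sin k : ℝ) : ℂ)^2) ^ ((1/2 : ℂ) - 1)
          * (-(2 * x * ((Real.sin k : ℝ) : ℂ)^2))‖ ≤ (Real.sqrt (1 - ρ^2))⁻¹ := by
    apply MeasureTheory.ae_of_all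
    intro t _ x hx
    obtain ⟨hx1, hx2⟩ := hball x hx
    refine (norm_deriv_bound hx1 t).trans ?_
    have h1 : 1 - ρ^2 ≤ 1 - ‖x‖ ^ 2 := by
      nlinarith [norm_nonneg x]
    have h2 : Real.sqrt (1 - ρ^2) ≤ Real.sqrt (1 - ‖x‖ ^ 2) :=
      Real.sqrt_le_sqrt h1
    have h3 : 0 < Real.sqrt (1 - ρ^2) := Real.sqrt_pos.mpr hρ2
    exact inv_anti₀ h3 h2
  have hbint : IntervalIntegrable (fun _ : ℝ => (Real.sqrt (1 - ρ^2))⁻¹)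
      MeasureTheory.volume 0 (π/2) := intervalIntegrable_const
  have hdiff : ∀ᵐ k : ℝ ∂MeasureTheory.volume, k ∈ Set.uIoc (0:ℝ) (π/2) →
      ∀ x ∈ Metric.ball w ε,
        HasDerivAt (fun y : ℂ => (1 - y^2 * ((Real.sin k : ℝ) : ℂ)^2) ^ (1/2 : ℂ))
          ((1/2 : ℂ) * (1 - x^2 * ((Real.sin k : ℝ) : ℂ)^2) ^ ((1/2 : ℂ) - 1)
            * (-(2 * x * ((Real.sin k : ℝ) : ℂ)^2))) x := by
    apply MeasureTheory.ae_of_all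
    intro t _ x hx
    exact hasDerivAt_integrand (hball x hx).1 t
  have key := intervalIntegral.hasDerivAt_integral_of_dominated_loc_of_deriv_le
    (Metric.ball_mem_nhds w hεpos) hmeas hint hmeas' hbound hbint hdiff
  exact key.2.differentiableAt

lemma analyticAt_Fc {w : ℂ} (hw : ‖w‖ < 1) : AnalyticAt ℂ Fc w := by
  have hdiff : DifferentiableOn ℂ Fc (Metric.ball (0:ℂ) 1) := by
    intro x hx
    rw [Metric.mem_ball, Complex.dist_eq, sub_zero] at hx
    exact (differentiableAt_Fc hx).differentiableWithinAt
  exact (hdiff.analyticOnNhd Metric.isOpen_ball) w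
    (by rw [Metric.mem_ball, Complex.dist_eq, sub_zero]; exact hw)

lemma Fc_ofReal {x : ℝ} (hx : x ∈ Set.Ioo (0:ℝ) 1) : Fc (x:ℂ) = ((ellipticE x : ℝ) : ℂ) := by
  rw [Fc, ellipticE, ← intervalIntegral.integral_ofReal]
  apply intervalIntegral.integral_congr
  intro k _
  have hA : (0:ℝ) ≤ 1 - x^2 * Real.sin k^2 := (A_pos' hx k).le
  show ((1:ℂ) - (x:ℂ)^2 * ((Real.sin k : ℝ) : ℂ)^2) ^ (1/2 : ℂ)
      = ((Real.sqrt (1 - x ^ 2 * Real.sin k ^ 2) : ℝ) : ℂ)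
  have h1 : ((1:ℂ) - (x:ℂ)^2 * ((Real.sin k : ℝ) : ℂ)^2)
      = (((1 - x^2*Real.sin k^2 : ℝ)) : ℂ) := by push_cast; ring
  rw [h1]
  have h2 : Real.sqrt (1 - x ^ 2 * Real.sin k ^ 2)
      = (1 - x^2*Real.sin k^2) ^ ((1:ℝ)/2) := Real.sqrt_eq_rpow _
  rw [h2, Complex.ofReal_cpow hA]
  norm_num

lemma analyticOnNhd_ellipticE : AnalyticOnNhd ℝ ellipticE (Set.Ioo 0 1) := by
  intro z₀ hz₀
  have hz1 : ‖((z₀ : ℝ) : ℂ)‖ < 1 := by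
    rw [Complex.norm_real, Real.norm_eq_abs, abs_of_pos hz₀.1]
    exact hz₀.2
  have hF : AnalyticAt ℝ Fc ((z₀ : ℝ) : ℂ) := (analyticAt_Fc hz1).restrictScalars
  have hof : AnalyticAt ℝ (fun x : ℝ => (x : ℂ)) z₀ := Complex.ofRealCLM.analyticAt z₀
  have hcomp1 : AnalyticAt ℝ (fun x : ℝ => Fc (x : ℂ)) z₀ := hF.comp hof
  have hre : AnalyticAt ℝ (fun w : ℂ => w.re) (Fc ((z₀ : ℝ) : ℂ)) :=
    Complex.reCLM.analyticAt _
  have hcomp : AnalyticAt ℝ (fun x : ℝ => (Fc (x : ℂ)).re) z₀ :=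
    AnalyticAt.comp (g := fun w : ℂ => w.re) (f := fun x : ℝ => Fc (x : ℂ)) hre hcomp1
  apply hcomp.congr
  filter_upwards [Ioo_mem_nhds hz₀.1 hz₀.2] with x hx
  rw [Fc_ofReal hx, Complex.ofReal_re]

lemma eval_expand (p : MvPolynomial (Fin 2) ℝ) (z : ℝ) :
    MvPolynomial.eval ![z, ellipticE z] p
      = ∑ m ∈ p.support, MvPolynomial.coeff m p * (z ^ m 0 * ellipticE z ^ m 1) := by
  rw [MvPolynomial.eval_eq']
  refine Finset.sum_congr rfl fun m _ => ?_
  rw [Fin.prod_univ_two]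
  simp

lemma analyticOnNhd_eval (p : MvPolynomial (Fin 2) ℝ) :
    AnalyticOnNhd ℝ (fun z => MvPolynomial.eval ![z, ellipticE z] p) (Set.Ioo 0 1) := by
  intro z hz
  have h1 : AnalyticAt ℝ
      (fun z => ∑ m ∈ p.support, MvPolynomial.coeff m p * (z ^ m 0 * ellipticE z ^ m 1)) z := by
    apply Finset.analyticAt_fun_sum
    intro m _
    exact analyticAt_const.mul (((analyticAt_id).pow _).mul
      ((analyticOnNhd_ellipticE z hz).pow _))
  exact h1.congr (Filter.Eventually.of_forall fun x => (eval_expand p x).symm)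



end EllipticAux

open Filter Topology MvPolynomial EllipticAux in
/-- The complete elliptic integral of the second kind is transcendental over `ℝ` on
`(0, 1)`: no nonzero real polynomial in two variables vanishes identically on any piece
of its graph. -/
theorem ellipticE_transcendental :
    ∀ p : MvPolynomial (Fin 2) ℝ, p ≠ 0 → ∀ a b : ℝ, 0 < a → a < b → b < 1 →
      ∃ z ∈ Set.Ioo a b, MvPolynomial.eval ![z, ellipticE z] p ≠ 0 := by
  intro p hp a b ha hab hb1
  by_contra hcon
  push_neg at hcon
  -- the evaluation function vanishes identically on (0,1)
  have hzeroAll : Set.EqOn (fun z => MvPolynomial.eval ![z, ellipticE z] p) 0 (Set.Ioo 0 1) := by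
    apply (analyticOnNhd_eval p).eqOn_zero_of_preconnected_of_eventuallyEq_zero
      isPreconnected_Ioo (z₀ := (a + b)/2)
    · constructor <;> [linarith; linarith]
    · filter_upwards [Ioo_mem_nhds (by linarith : a < (a+b)/2) (by linarith : (a+b)/2 < b)]
        with z hz
      exact hcon z hz
  -- change of variables
  set G : Fin 2 → MvPolynomial (Fin 2) ℝ := ![1 - X 0, 1 + X 1] with hG
  set q : MvPolynomial (Fin 2) ℝ := bind₁ G p with hq
  have haee : ∀ (ψ : MvPolynomial (Fin 2) ℝ) (f : Fin 2 → ℝ), aeval f ψ = eval f ψ := by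
    intro ψ f
    simp [MvPolynomial.aeval_def]
  have hq0 : q ≠ 0 := by
    intro h0
    apply hp
    have hGinv : bind₁ (![1 - X 0, X 1 - 1] : Fin 2 → MvPolynomial (Fin 2) ℝ) q = p := by
      rw [hq, bind₁_bind₁]
      have hfun : (fun i => bind₁ (![1 - X 0, X 1 - 1] : Fin 2 → MvPolynomial (Fin 2) ℝ) (G i))
          = (X : Fin 2 → MvPolynomial (Fin 2) ℝ) := by
        funext i
        fin_cases i <;> (first | (simp [hG]; ring) | simp [hG])
      rw [hfun, bind₁_X_left]
      rfl
    rw [h0] at hGinv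
    rw [← hGinv]
    simp
  have hqeval : ∀ z : ℝ, eval ![1 - z, ellipticE z - 1] q = eval ![z, ellipticE z] p := by
    intro z
    rw [hq]
    have h1 : eval ![1 - z, ellipticE z - 1] (bind₁ G p)
        = eval (fun i => eval ![1 - z, ellipticE z - 1] (G i)) p := by
      have := aeval_bind₁ (R := ℝ) (S := ℝ) ![1 - z, ellipticE z - 1] G p
      rw [haee, haee] at this
      rw [this]
      congr 1
    have hfun2 : (fun i => eval ![1 - z, ellipticE z - 1] (G i)) = ![z, ellipticE z] := by
      funext i
      fin_cases i <;> (first | (simp [hG]; ring) | simp [hG])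
    rw [hfun2] at h1
    exact h1
  -- apply the main lemma along 𝓝[<] 1
  have hu : ∀ᶠ z in nhdsWithin (1:ℝ) (Set.Iio 1), 0 < 1 - z := by
    filter_upwards [self_mem_nhdsWithin] with z (hz : z < 1)
    linarith
  have hvu := tendsto_ratio_atTop
  have hv : ∀ᶠ z in nhdsWithin (1:ℝ) (Set.Iio 1), 0 < ellipticE z - 1 := by
    filter_upwards [hvu.eventually_ge_atTop 1, hu] with z h1 h2
    nlinarith [(one_le_div h2).mp h1]
  have hv0 : Filter.Tendsto (fun z => ellipticE z - 1) (nhdsWithin (1:ℝ) (Set.Iio 1))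
      (nhds 0) := by
    have := tendsto_pow_ratio 0
    simpa using this
  have hzeroq : ∀ᶠ z in nhdsWithin (1:ℝ) (Set.Iio 1),
      eval ![1 - z, ellipticE z - 1] q = 0 := by
    filter_upwards [h01] with z hz
    rw [hqeval z]
    exact hzeroAll hz
  exact no_poly_rel hu hv hv0 hvu tendsto_pow_ratio q hq0 hzeroq

end
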